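/- Let G be a group and let (R_α)_{α ≤ γ} be an ordinal-indexed ascending chain of normal subgroups of G with R_0 = 1, R_λ = ⋃_{β<λ} R_β for every limit ordinal λ ≤ γ, and such that for every α < γ, every element of R_{α+1} maps to a nil-element of G/R_α (i.e., for every g ∈ R_{α+1} and every a ∈ G there is n ≥ 1 with e_n(a,g) ∈ R_α). Then every element g ∈ R_γ is an unbounded quasi-nil element of G: for every sequence a_1, a_2, a_3, … of elements of G there exist k ≥ 1 and n_1,…,n_k ≥ 1 such that ε_{(n_1,…,n_k)}(a_1,…,a_k; g) = 1. -/

import Mathlib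

/-- Engel words with the convention of the paper: the commutator is
`[x, y] = x⁻¹ * y⁻¹ * x * y`, `engelWord 0 x y = x` and
`engelWord (n+1) x y = [engelWord n x y, y]`; thus for `n ≥ 1`,
`engelWord n x y` is the Engel word `e_n(x, y)`. -/
def engelWord {G : Type*} [Group G] : ℕ → G → G → G
  | 0, x, _ => x
  | n + 1, x, y => (engelWord n x y)⁻¹ * y⁻¹ * engelWord n x y * y

/-- Iterated Engel words: `epsEngel [(n₁,a₁),…,(n_k,a_k)] y` is
`ε_{(n₁,…,n_k)}(a₁,…,a_k; y)`, defined by `ε_{(n₁)}(a₁;y) = e_{n₁}(a₁,y)` and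
`ε_{(n₁,…,n_k)}(a₁,…,a_k;y) = e_{n_k}(a_k, ε_{(n₁,…,n_{k-1})}(a₁,…,a_{k-1};y))`. -/
def epsEngel {G : Type*} [Group G] (l : List (ℕ × G)) (y : G) : G :=
  l.foldl (fun z p => engelWord p.1 p.2 z) y

/-- `g` is a nil-element if for every `a` there is `n ≥ 1` with `e_n(a, g) = 1`. -/
def IsNilElement {G : Type*} [Group G] (g : G) : Prop :=
  ∀ a : G, ∃ n, 1 ≤ n ∧ engelWord n a g = 1

/-- A group is locally nilpotent if every finitely generated subgroup is nilpotent. -/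
def LocallyNilpotent (G : Type*) [Group G] : Prop :=
  ∀ H : Subgroup G, H.FG → Group.IsNilpotent H

/-- `g` is quasi-nil of order ≤ `k`: there are functions `ν i : G^(i+1) → ℕ` (with values ≥ 1,
`ν i` depending only on `a₁,…,a_{i+1}` and `g`) such that for all `a : Fin k → G`,
`ε_{(ν₁(a₁),…,ν_k(a₁,…,a_k))}(a₁,…,a_k; g) = 1`. -/
def IsQuasiNilOfOrder {G : Type*} [Group G] (k : ℕ) (g : G) : Prop :=
  ∃ ν : ∀ i : Fin k, (Fin ((i : ℕ) + 1) → G) → ℕ,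
    (∀ i f, 1 ≤ ν i f) ∧
    ∀ a : Fin k → G,
      epsEngel (List.ofFn fun i : Fin k =>
        (ν i fun j => a (Fin.castLE i.isLt j), a i)) g = 1

/-- `g` is quasi-nil if it is quasi-nil of order ≤ `k` for some `k ≥ 1`. -/
def IsQuasiNil {G : Type*} [Group G] (g : G) : Prop :=
  ∃ k, 1 ≤ k ∧ IsQuasiNilOfOrder k g

/-- `g` maps to a nil-element of the quotient `G ⧸ N` (for `N` normal). -/
def IsNilElementQuot {G : Type*} [Group G] (N : Subgroup G) (hN : N.Normal) (g : G) : Prop :=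
  @IsNilElement (G ⧸ N) (@QuotientGroup.Quotient.group G _ N hN) (QuotientGroup.mk g)

/-- for an ordinal-indexed ascending chain of normal subgroups `R α`
(`α ≤ γ`) with `R 0 = 1`, continuous at limit ordinals, and such that every element of
`R (α+1)` maps to a nil-element of `G / R α`, every `g ∈ R γ` is an unbounded quasi-nil
element of `G`. -/
theorem unbounded_quasiNil_of_upper_radical_series {G : Type*} [Group G]
    (γ : Ordinal) (R : Ordinal → Subgroup G)
    (hbot : R 0 = ⊥)
    (hnorm : ∀ α ≤ γ, (R α).Normal)
    (hmono : ∀ α β : Ordinal, α ≤ β → β ≤ γ → R α ≤ R β)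
    (hlim : ∀ lam ≤ γ, Order.IsSuccLimit lam → R lam = ⨆ β < lam, R β)
    (hsucc : ∀ α < γ, ∀ g ∈ R (α + 1), ∀ a : G, ∃ n, 1 ≤ n ∧ engelWord n a g ∈ R α)
    (g : G) (hg : g ∈ R γ) (a : ℕ → G) :
    ∃ k, 1 ≤ k ∧ ∃ ns : Fin k → ℕ, (∀ i, 1 ≤ ns i) ∧
      epsEngel (List.ofFn fun i : Fin k => (ns i, a (i : ℕ))) g = 1 := by

  have key : ∀ α : Ordinal, α ≤ γ → ∀ g ∈ R α, ∀ a : ℕ → G,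
      ∃ k, 1 ≤ k ∧ ∃ ns : Fin k → ℕ, (∀ i, 1 ≤ ns i) ∧
        epsEngel (List.ofFn fun i : Fin k => (ns i, a (i : ℕ))) g = 1 := by
    intro α
    induction α using Ordinal.induction with
    | h α IH =>
      intro hα g hgα a
      rcases Ordinal.zero_or_succ_or_isSuccLimit α with h0 | ⟨β, rfl⟩ | hlimα
      · subst h0
        rw [hbot, Subgroup.mem_bot] at hgα
        refine ⟨1, le_refl 1, fun _ => 1, fun _ => le_refl 1, ?_⟩
        simp [epsEngel, engelWord, hgα]
      · have hβα : β < Order.succ β := Order.lt_succ β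
        have hβγ : β < γ := lt_of_lt_of_le hβα hα
        rw [← Ordinal.add_one_eq_succ] at hgα
        obtain ⟨n, hn1, hnR⟩ := hsucc β hβγ g hgα (a 0)
        obtain ⟨k, hk, ns, hns, hval⟩ :=
          IH β hβα (le_of_lt hβγ) _ hnR (fun i => a (i + 1))
        refine ⟨k + 1, by omega, Fin.cases n ns, ?_, ?_⟩
        · intro i
          induction i using Fin.cases with
          | zero => simpa using hn1
          | succ j => simpa using hns j
        · rw [List.ofFn_succ]
          simpa [epsEngel] using hval
      · rw [hlim α hα hlimα, iSup_subtype'] at hgα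
        have hdir : Directed (· ≤ ·) fun β : {β : Ordinal // β < α} => R β.1 := by
          intro i j
          refine ⟨⟨max i.1 j.1, max_lt i.2 j.2⟩, ?_, ?_⟩
          · exact hmono i.1 _ (le_max_left _ _) (le_of_lt (lt_of_lt_of_le (max_lt i.2 j.2) hα))
          · exact hmono j.1 _ (le_max_right _ _) (le_of_lt (lt_of_lt_of_le (max_lt i.2 j.2) hα))
        have : Nonempty {β : Ordinal // β < α} := ⟨⟨0, hlimα.pos⟩⟩
        obtain ⟨⟨β, hβα⟩, hβ⟩ := (Subgroup.mem_iSup_of_directed hdir).mp hgα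
        exact IH β hβα (le_of_lt (lt_of_lt_of_le hβα hα)) g hβ a
  exact key γ le_rfl g hg a
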